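/- (Theorem 3, cone computations) Let Λ = {1,2,3,4} and suppose η₁ρ₁ − η₂ρ₂ ∈ ℍ₊, η₁ρ₁ − η₃ρ₃ ∈ SEP*\ℍ₊, η₂ρ₂ − η₄ρ₄ ∈ SEP*, η₃ρ₃ − η₄ρ₄ ∈ ℍ₊. Then: (a) η₁ρ₁ − η₄ρ₄ ∈ SEP*; (b) for S = {1,2} and μ = (1,3), η̃_μρ̃_μ − η̃_ωρ̃_ω ∈ ℍ₊ for all ω ∈ S × S^c; (c) for S = {1,3} and μ = (1,2), η̃_μρ̃_μ − η̃_ωρ̃_ω ∈ SEP* for all ω ∈ S × S^c, and η̃_μρ̃_μ − η̃_(3,2)ρ̃_(3,2) ∉ ℍ₊. -/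

import Mathlib

open Matrix
open scoped ComplexOrder

/-- Hermitian operators on the bipartite space `ℂ^dA ⊗ ℂ^dB`, modeled as matrices
indexed by `Fin dA × Fin dB`. -/
abbrev Mat (dA dB : ℕ) := Matrix (Fin dA × Fin dB) (Fin dA × Fin dB) ℂ

/-- A bipartite operator is separable if it is a finite sum of Kronecker products of
positive-semidefinite operators on the two factors. -/
def IsSep {dA dB : ℕ} (E : Mat dA dB) : Prop :=
  ∃ (n : ℕ) (A : Fin n → Matrix (Fin dA) (Fin dA) ℂ)
    (B : Fin n → Matrix (Fin dB) (Fin dB) ℂ),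
    (∀ l, (A l).PosSemidef) ∧ (∀ l, (B l).PosSemidef) ∧
      E = ∑ l, Matrix.kroneckerMap (· * ·) (A l) (B l)

/-- Membership in the dual cone `SEP*` (block positivity): Hermitian with
`Tr(E F) ≥ 0` for every separable `F`. -/
def InSEPdual {dA dB : ℕ} (E : Mat dA dB) : Prop :=
  E.IsHermitian ∧ ∀ F : Mat dA dB, IsSep F → 0 ≤ (E * F).trace

lemma kron_conjTranspose {m n p q : Type*} (A : Matrix m n ℂ) (B : Matrix p q ℂ) :
    (Matrix.kroneckerMap (· * ·) A B)ᴴ = Matrix.kroneckerMap (· * ·) Aᴴ Bᴴ := by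
  ext ⟨i, j⟩ ⟨k, l⟩
  simp [Matrix.kroneckerMap, Matrix.conjTranspose_apply, mul_comm]

lemma kron_psd {m p : Type*} [Fintype m] [Fintype p] [DecidableEq m] [DecidableEq p]
    {A : Matrix m m ℂ} {B : Matrix p p ℂ} (hA : A.PosSemidef) (hB : B.PosSemidef) :
    (Matrix.kroneckerMap (· * ·) A B).PosSemidef := by
  exact hA.kronecker hB

lemma psd_trace_nonneg {n : Type*} [Fintype n] [DecidableEq n] {M : Matrix n n ℂ}
    (h : M.PosSemidef) : 0 ≤ M.trace := by
  rw [Matrix.trace]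
  apply Finset.sum_nonneg
  intro i _
  exact h.diag_nonneg

lemma psd_trace_mul_nonneg {n : Type*} [Fintype n] [DecidableEq n]
    {E F : Matrix n n ℂ} (hE : E.PosSemidef) (hF : F.PosSemidef) :
    0 ≤ (E * F).trace := by
  have h1 : ∃ B : Matrix n n ℂ, F = star B * B := by
    open scoped MatrixOrder in exact CStarAlgebra.nonneg_iff_eq_star_mul_self.mp hF.nonneg
  obtain ⟨B, rfl⟩ := h1
  rw [star_eq_conjTranspose, ← Matrix.mul_assoc, Matrix.trace_mul_cycle]
  exact psd_trace_nonneg (hE.mul_mul_conjTranspose_same B)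

lemma psd_inSEPdual {dA dB : ℕ} {E : Mat dA dB} (h : E.PosSemidef) : InSEPdual E := by
  refine ⟨h.1, ?_⟩
  rintro F ⟨n, A, B, hA, hB, rfl⟩
  rw [Matrix.mul_sum, Matrix.trace_sum]
  exact Finset.sum_nonneg fun l _ => psd_trace_mul_nonneg h (kron_psd (hA l) (hB l))

lemma sepdual_add {dA dB : ℕ} {E F : Mat dA dB} (hE : InSEPdual E) (hF : InSEPdual F) :
    InSEPdual (E + F) := by
  refine ⟨hE.1.add hF.1, fun G hG => ?_⟩
  rw [Matrix.add_mul, Matrix.trace_add]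
  exact add_nonneg (hE.2 G hG) (hF.2 G hG)

lemma psd_real_smul {n : Type*} [Fintype n] [DecidableEq n] {M : Matrix n n ℂ}
    (c : ℝ) (hc : 0 ≤ c) (h : M.PosSemidef) : ((c : ℂ) • M).PosSemidef := by
  constructor
  · show ((c : ℂ) • M)ᴴ = _
    rw [Matrix.conjTranspose_smul, h.1.eq]
    congr 1
    simp
  · intro x
    exact (h.smul (show (0 : ℂ) ≤ c by exact_mod_cast hc)).2 x

lemma sepdual_real_smul {dA dB : ℕ} {E : Mat dA dB}
    (c : ℝ) (hc : 0 ≤ c) (h : InSEPdual E) : InSEPdual ((c : ℂ) • E) := by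
  constructor
  · show ((c : ℂ) • E)ᴴ = _
    rw [Matrix.conjTranspose_smul, h.1.eq]
    congr 1
    simp
  · intro F hF
    rw [Matrix.smul_mul, Matrix.trace_smul, smul_eq_mul]
    exact mul_nonneg (by exact_mod_cast hc) (h.2 F hF)

lemma half_cast : ((2 : ℂ))⁻¹ = (((2 : ℝ)⁻¹ : ℝ) : ℂ) := by norm_num

lemma psd_half {n : Type*} [Fintype n] [DecidableEq n] {M : Matrix n n ℂ}
    (h : M.PosSemidef) : ((2 : ℂ)⁻¹ • M).PosSemidef := by
  rw [half_cast]
  exact psd_real_smul _ (by norm_num) h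

lemma sepdual_half {dA dB : ℕ} {E : Mat dA dB} (h : InSEPdual E) :
    InSEPdual ((2 : ℂ)⁻¹ • E) := by
  rw [half_cast]
  exact sepdual_real_smul _ (by norm_num) h

theorem thm3_cone_computations {dA dB : ℕ}
    (η : Fin 4 → ℝ) (ρ : Fin 4 → Mat dA dB)
    (hη : ∀ i, 0 < η i) (hsum : ∑ i, η i = 1)
    (hρ : ∀ i, (ρ i).PosSemidef ∧ (ρ i).trace = 1)
    (lam : Fin 4 → Mat dA dB) (hlam : ∀ i, lam i = (η i : ℂ) • ρ i)
    (T : Fin 4 × Fin 4 → Fin 4 × Fin 4 → Mat dA dB)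
    (hT : ∀ p q, T p q = (2 : ℂ)⁻¹ • (lam p.1 + lam p.2 - lam q.1 - lam q.2))
    (h12 : (lam 0 - lam 1).PosSemidef)
    (h13 : InSEPdual (lam 0 - lam 2) ∧ ¬ (lam 0 - lam 2).PosSemidef)
    (h24 : InSEPdual (lam 1 - lam 3))
    (h34 : (lam 2 - lam 3).PosSemidef) :
    InSEPdual (lam 0 - lam 3) ∧
    (∀ a ∈ ({0, 1} : Finset (Fin 4)), ∀ b ∈ ({2, 3} : Finset (Fin 4)),
        (T (0, 2) (a, b)).PosSemidef) ∧
    (∀ a ∈ ({0, 2} : Finset (Fin 4)), ∀ b ∈ ({1, 3} : Finset (Fin 4)),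
        InSEPdual (T (0, 1) (a, b))) ∧
    ¬ (T (0, 1) (2, 1)).PosSemidef := by
  refine ⟨?_, ?_, ?_, ?_⟩
  · have e : lam 0 - lam 3 = (lam 0 - lam 2) + (lam 2 - lam 3) := by abel
    rw [e]
    exact sepdual_add h13.1 (psd_inSEPdual h34)
  · intro a ha b hb
    fin_cases ha <;> fin_cases hb <;> rw [hT]
    · have e : lam (0,2).1 + lam (0,2).2 - lam ((0 : Fin 4), (2 : Fin 4)).1
          - lam ((0 : Fin 4), (2 : Fin 4)).2 = 0 := by abel
      rw [e, smul_zero]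
      exact Matrix.PosSemidef.zero
    · have e : lam (0,2).1 + lam (0,2).2 - lam ((0 : Fin 4), (3 : Fin 4)).1
          - lam ((0 : Fin 4), (3 : Fin 4)).2 = lam 2 - lam 3 := by abel
      rw [e]
      exact psd_half h34
    · have e : lam (0,2).1 + lam (0,2).2 - lam ((1 : Fin 4), (2 : Fin 4)).1
          - lam ((1 : Fin 4), (2 : Fin 4)).2 = lam 0 - lam 1 := by abel
      rw [e]
      exact psd_half h12
    · have e : lam (0,2).1 + lam (0,2).2 - lam ((1 : Fin 4), (3 : Fin 4)).1
          - lam ((1 : Fin 4), (3 : Fin 4)).2 = (lam 0 - lam 1) + (lam 2 - lam 3) := by abel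
      rw [e]
      exact psd_half (h12.add h34)
  · intro a ha b hb
    fin_cases ha <;> fin_cases hb <;> rw [hT]
    · have e : lam (0,1).1 + lam (0,1).2 - lam ((0 : Fin 4), (1 : Fin 4)).1
          - lam ((0 : Fin 4), (1 : Fin 4)).2 = 0 := by abel
      rw [e, smul_zero]
      exact psd_inSEPdual Matrix.PosSemidef.zero
    · have e : lam (0,1).1 + lam (0,1).2 - lam ((0 : Fin 4), (3 : Fin 4)).1
          - lam ((0 : Fin 4), (3 : Fin 4)).2 = lam 1 - lam 3 := by abel
      rw [e]
      exact sepdual_half h24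
    · have e : lam (0,1).1 + lam (0,1).2 - lam ((2 : Fin 4), (1 : Fin 4)).1
          - lam ((2 : Fin 4), (1 : Fin 4)).2 = lam 0 - lam 2 := by abel
      rw [e]
      exact sepdual_half h13.1
    · have e : lam (0,1).1 + lam (0,1).2 - lam ((2 : Fin 4), (3 : Fin 4)).1
          - lam ((2 : Fin 4), (3 : Fin 4)).2 = (lam 0 - lam 2) + (lam 1 - lam 3) := by abel
      rw [e]
      exact sepdual_half (sepdual_add h13.1 h24)
  · intro h
    rw [hT] at h
    have e : lam (0,1).1 + lam (0,1).2 - lam ((2 : Fin 4), (1 : Fin 4)).1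
        - lam ((2 : Fin 4), (1 : Fin 4)).2 = lam 0 - lam 2 := by abel
    rw [e] at h
    have h2 : (((2 : ℝ) : ℂ) • ((2 : ℂ)⁻¹ • (lam 0 - lam 2))).PosSemidef :=
      psd_real_smul 2 (by norm_num) h
    rw [smul_smul] at h2
    norm_num at h2
    exact h13.2 h2
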